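/- Let k be even and let w : {0,1,…,k} → ℝ be any function. For m ∈ {0,1}^k write wt(m) = Σ_{j∈[k]} m_j for its Hamming weight. Then for all distinct indices i₁ ≠ i₂ in [k/2], Σ_{m ∈ {0,1}^k} w(wt(m)) · (m_{2i₁−1} − m_{2i₁}) · (m_{2i₂−1} − m_{2i₂}) = 0. In particular, taking w(t) = q^{k−t}(1−q)^t/(t·e^{2ε} + (k−t)) for any q ∈ (0,1) and ε > 0, the corresponding weighted sum vanishes for every pair i₁ ≠ i₂. -/

import Mathlib

open Finset

lemma cancel_aux (k : ℕ) (a b c d : Fin k) (hab : a ≠ b)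
    (hac : a ≠ c) (had : a ≠ d) (hbc : b ≠ c) (hbd : b ≠ d) (w : ℕ → ℝ) :
    ∑ m : Fin k → Bool,
      w (∑ j, if m j then 1 else 0) *
        ((if m a then (1:ℝ) else 0) - (if m b then (1:ℝ) else 0)) *
        ((if m c then (1:ℝ) else 0) - (if m d then (1:ℝ) else 0)) = 0 := by
  set F : (Fin k → Bool) → ℝ := fun m =>
    w (∑ j, if m j then 1 else 0) *
      ((if m a then (1:ℝ) else 0) - (if m b then (1:ℝ) else 0)) *
      ((if m c then (1:ℝ) else 0) - (if m d then (1:ℝ) else 0)) with hF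
  have hbij : Function.Bijective (fun m : Fin k → Bool => m ∘ Equiv.swap a b) := by
    constructor
    · intro m₁ m₂ h
      funext j
      have := congrFun h (Equiv.swap a b j)
      simpa using this
    · intro m
      exact ⟨m ∘ Equiv.swap a b, by funext j; simp⟩
  have key : ∀ m : Fin k → Bool, F (m ∘ Equiv.swap a b) = - F m := by
    intro m
    have hwt : (∑ j, if (m ∘ Equiv.swap a b) j then (1:ℕ) else 0)
        = ∑ j, if m j then 1 else 0 := by
      exact Equiv.sum_comp (Equiv.swap a b) (fun j => if m j then (1:ℕ) else 0)
    have h1 : (m ∘ Equiv.swap a b) a = m b := by simp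
    have h2 : (m ∘ Equiv.swap a b) b = m a := by simp
    have h3 : (m ∘ Equiv.swap a b) c = m c := by
      simp [Function.comp, Equiv.swap_apply_of_ne_of_ne hac.symm hbc.symm]
    have h4 : (m ∘ Equiv.swap a b) d = m d := by
      simp [Function.comp, Equiv.swap_apply_of_ne_of_ne had.symm hbd.symm]
    simp only [hF, hwt, h1, h2, h3, h4]
    ring
  have hsum : ∑ m : Fin k → Bool, F m = ∑ m : Fin k → Bool, F (m ∘ Equiv.swap a b) :=
    (Function.Bijective.sum_comp hbij F).symm
  have h2 : ∑ m : Fin k → Bool, F (m ∘ Equiv.swap a b) = - ∑ m : Fin k → Bool, F m := by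
    rw [Finset.sum_congr rfl (fun m _ => key m)]
    exact Finset.sum_neg_distrib F
  have := hsum.trans h2
  linarith

/-- Combinatorial cancellation over paired coordinates: any weight function of the
Hamming weight alone makes the cross terms over distinct coordinate pairs cancel.
(The pairs of `[k]`, `k` even, are `(2i−1, 2i)`, here `0`-indexed as `(2i, 2i+1)` for
`i < k/2`.)  In particular this holds for the specific weight
`w(t) = q^{k−t}(1−q)^t/(t e^{2ε} + (k−t))` arising in the RAPPOR lower bound. -/
theorem paired_weight_cancellation
    (k : ℕ) (hk : k % 2 = 0) (i₁ i₂ : Fin (k / 2)) (hne : i₁ ≠ i₂) :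
    (∀ w : ℕ → ℝ,
      ∑ m : Fin k → Bool,
        w (∑ j, if m j then 1 else 0) *
          ((if m ⟨2 * i₁.val, by have := i₁.isLt; omega⟩ then (1 : ℝ) else 0)
            - (if m ⟨2 * i₁.val + 1, by have := i₁.isLt; omega⟩ then (1 : ℝ) else 0)) *
          ((if m ⟨2 * i₂.val, by have := i₂.isLt; omega⟩ then (1 : ℝ) else 0)
            - (if m ⟨2 * i₂.val + 1, by have := i₂.isLt; omega⟩ then (1 : ℝ) else 0))
        = 0)
    ∧ ∀ q ε : ℝ, 0 < q → q < 1 → 0 < ε →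
      ∑ m : Fin k → Bool,
        (q ^ (k - (∑ j, if m j then 1 else 0)) * (1 - q) ^ (∑ j, if m j then 1 else 0)
            / (((∑ j, if m j then 1 else 0 : ℕ) : ℝ) * Real.exp (2 * ε)
                + ((k - (∑ j, if m j then 1 else 0 : ℕ) : ℕ) : ℝ))) *
          ((if m ⟨2 * i₁.val, by have := i₁.isLt; omega⟩ then (1 : ℝ) else 0)
            - (if m ⟨2 * i₁.val + 1, by have := i₁.isLt; omega⟩ then (1 : ℝ) else 0)) *
          ((if m ⟨2 * i₂.val, by have := i₂.isLt; omega⟩ then (1 : ℝ) else 0)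
            - (if m ⟨2 * i₂.val + 1, by have := i₂.isLt; omega⟩ then (1 : ℝ) else 0))
        = 0 := by
  have hv : i₁.val ≠ i₂.val := fun h => hne (Fin.ext h)
  constructor
  · intro w
    exact cancel_aux k _ _ _ _
      (Fin.ne_of_val_ne (by simp only [Fin.val_mk]; omega)) (Fin.ne_of_val_ne (by simp only [Fin.val_mk]; omega))
      (Fin.ne_of_val_ne (by simp only [Fin.val_mk]; omega)) (Fin.ne_of_val_ne (by simp only [Fin.val_mk]; omega))
      (Fin.ne_of_val_ne (by simp only [Fin.val_mk]; omega)) w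
  · intro q ε _ _ _
    exact cancel_aux k _ _ _ _
      (Fin.ne_of_val_ne (by simp only [Fin.val_mk]; omega)) (Fin.ne_of_val_ne (by simp only [Fin.val_mk]; omega))
      (Fin.ne_of_val_ne (by simp only [Fin.val_mk]; omega)) (Fin.ne_of_val_ne (by simp only [Fin.val_mk]; omega))
      (Fin.ne_of_val_ne (by simp only [Fin.val_mk]; omega))
      (fun t => q ^ (k - t) * (1 - q) ^ t / ((t : ℝ) * Real.exp (2 * ε) + ((k - t : ℕ) : ℝ)))
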